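/- Let c ∈ (0,1) and a > 2 be real constants, and let (p_n)_{n ∈ ℕ} be a sequence of natural numbers such that p_n / (log n)^c → 0 as n → ∞. Then for all sufficiently large n, n^{−1/(p_n+1)} · log n + ( n^{−1/(2(p_n+1))} · √(p_n) )^{a/(a−1)} ≤ 2 · ( n^{−1/(p_n+1)} · log n )^{a/(2(a−1))}. -/

import Mathlib

open Filter

/-- Let `c ∈ (0,1)`, `a > 2`, and `p_n = o((log n)^c)`. Then for all
sufficiently large `n`,
`n^{-1/(p_n+1)}·log n + (n^{-1/(2(p_n+1))}·√p_n)^{a/(a-1)}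
  ≤ 2·(n^{-1/(p_n+1)}·log n)^{a/(2(a-1))}`. -/
theorem penalty_term_dominated
    (c a : ℝ) (hc0 : 0 < c) (hc1 : c < 1) (ha : 2 < a)
    (p : ℕ → ℕ)
    (hp : Tendsto (fun n : ℕ => (p n : ℝ) / Real.log n ^ c) atTop (nhds 0)) :
    ∃ N : ℕ, ∀ n : ℕ, N ≤ n →
      (n : ℝ) ^ (-(1 : ℝ) / ((p n : ℝ) + 1)) * Real.log n
          + ((n : ℝ) ^ (-(1 : ℝ) / (2 * ((p n : ℝ) + 1))) * Real.sqrt (p n))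
              ^ (a / (a - 1))
        ≤ 2 * ((n : ℝ) ^ (-(1 : ℝ) / ((p n : ℝ) + 1)) * Real.log n)
              ^ (a / (2 * (a - 1))) := by
  rw [← Filter.eventually_atTop]
  set q : ℝ := a / (2 * (a - 1)) with hq
  have hq0 : 0 < q := div_pos (by linarith) (by linarith)
  have hq1 : q ≤ 1 := by rw [hq, div_le_one (by linarith)]; linarith
  have haa : a / (a - 1) = 2 * q := by
    have h1 : a - 1 ≠ 0 := by linarith
    have h2 : (2 : ℝ) * (a - 1) ≠ 0 := by positivity
    rw [hq]; field_simp
  set ε : ℝ := (1 - c) / 2 with hε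
  have hε0 : 0 < ε := by rw [hε]; linarith
  have hcεε : c + ε + ε = 1 := by rw [hε]; ring
  have hlog : Tendsto (fun n : ℕ => Real.log n) atTop atTop :=
    Real.tendsto_log_atTop.comp tendsto_natCast_atTop_atTop
  have E2 : ∀ᶠ n : ℕ in atTop, (p n : ℝ) / Real.log n ^ c < 1 / 2 :=
    hp.eventually_lt_const (by norm_num)
  have E1 : ∀ᶠ n : ℕ in atTop, 1 ≤ Real.log n := hlog.eventually_ge_atTop 1
  have E3 : ∀ᶠ n : ℕ in atTop, 2 ≤ Real.log n ^ c :=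
    ((tendsto_rpow_atTop hc0).comp hlog).eventually_ge_atTop 2
  have E4 : ∀ᶠ n : ℕ in atTop, 1 / ε ≤ Real.log n ^ ε :=
    ((tendsto_rpow_atTop hε0).comp hlog).eventually_ge_atTop (1 / ε)
  have E0 : ∀ᶠ n : ℕ in atTop, 1 ≤ n := eventually_ge_atTop 1
  filter_upwards [E0, E1, E2, E3, E4] with n hn1 hL1 h2 h3 h4
  set L := Real.log n with hLdef
  have hL0 : (0 : ℝ) < L := lt_of_lt_of_le one_pos hL1
  have hn0 : (0 : ℝ) < (n : ℝ) := by exact_mod_cast hn1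
  set P : ℝ := (p n : ℝ) + 1 with hPdef
  have hP0 : (0 : ℝ) < P := by positivity
  have hLc0 : (0 : ℝ) < L ^ c := Real.rpow_pos_of_pos hL0 c
  have hpc : (p n : ℝ) ≤ 1 / 2 * L ^ c := le_of_lt ((div_lt_iff₀ hLc0).mp h2)
  have hP_le : P ≤ L ^ c := by rw [hPdef]; nlinarith
  have hpleL : (p n : ℝ) ≤ L := by
    have h1 : L ^ c ≤ L ^ (1 : ℝ) := Real.rpow_le_rpow_of_exponent_le hL1 hc1.le
    rw [Real.rpow_one] at h1
    linarith
  have hlogL : P * Real.log L ≤ L := by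
    have hlogle : Real.log L ≤ L ^ ε / ε := Real.log_le_rpow_div hL0.le hε0
    have hlogL0 : 0 ≤ Real.log L := Real.log_nonneg hL1
    have hLε0 : (0 : ℝ) ≤ L ^ ε := (Real.rpow_pos_of_pos hL0 ε).le
    calc P * Real.log L ≤ L ^ c * Real.log L :=
          mul_le_mul_of_nonneg_right hP_le hlogL0
      _ ≤ L ^ c * (L ^ ε / ε) := mul_le_mul_of_nonneg_left hlogle hLc0.le
      _ = L ^ c * L ^ ε * (1 / ε) := by ring
      _ ≤ L ^ c * L ^ ε * L ^ ε :=
          mul_le_mul_of_nonneg_left h4 (by positivity)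
      _ = L ^ (c + ε + ε) := by rw [Real.rpow_add hL0, Real.rpow_add hL0]
      _ = L ^ (1 : ℝ) := by rw [hcεε]
      _ = L := Real.rpow_one L
  have hLle : L ≤ (n : ℝ) ^ ((1 : ℝ) / P) := by
    have hlogle : Real.log L ≤ L * (1 / P) := by
      rw [mul_one_div, le_div_iff₀ hP0]
      linarith [hlogL]
    calc L = Real.exp (Real.log L) := (Real.exp_log hL0).symm
      _ ≤ Real.exp (L * (1 / P)) := Real.exp_le_exp.mpr hlogle
      _ = (n : ℝ) ^ ((1 : ℝ) / P) := by
          rw [Real.rpow_def_of_pos hn0, hLdef]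
  have hrp0 : (0 : ℝ) < (n : ℝ) ^ (-(1 : ℝ) / P) := Real.rpow_pos_of_pos hn0 _
  have ht1 : (n : ℝ) ^ (-(1 : ℝ) / P) * L ≤ 1 := by
    calc (n : ℝ) ^ (-(1 : ℝ) / P) * L
        ≤ (n : ℝ) ^ (-(1 : ℝ) / P) * (n : ℝ) ^ ((1 : ℝ) / P) :=
          mul_le_mul_of_nonneg_left hLle hrp0.le
      _ = (n : ℝ) ^ (-(1 : ℝ) / P + (1 : ℝ) / P) := (Real.rpow_add hn0 _ _).symm
      _ = 1 := by rw [show -(1 : ℝ) / P + (1 : ℝ) / P = 0 by ring, Real.rpow_zero]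
  have htpos : (0 : ℝ) < (n : ℝ) ^ (-(1 : ℝ) / P) * L := mul_pos hrp0 hL0
  -- rewrite the second term
  have hA : ((n : ℝ) ^ (-(1 : ℝ) / (2 * P))) ^ (2 : ℝ) = (n : ℝ) ^ (-(1 : ℝ) / P) := by
    rw [← Real.rpow_mul hn0.le]
    congr 1
    field_simp
  have hB : (Real.sqrt (p n)) ^ (2 : ℝ) = (p n : ℝ) := by
    rw [show (2 : ℝ) = ((2 : ℕ) : ℝ) by norm_num, Real.rpow_natCast,
      Real.sq_sqrt (Nat.cast_nonneg _)]
  have hX0 : (0 : ℝ) ≤ (n : ℝ) ^ (-(1 : ℝ) / (2 * P)) * Real.sqrt (p n) := by positivity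
  have hbase : ((n : ℝ) ^ (-(1 : ℝ) / (2 * P)) * Real.sqrt (p n)) ^ (2 : ℝ)
      = (n : ℝ) ^ (-(1 : ℝ) / P) * (p n : ℝ) := by
    rw [Real.mul_rpow (by positivity) (Real.sqrt_nonneg _), hA, hB]
  have hsq : ((n : ℝ) ^ (-(1 : ℝ) / (2 * P)) * Real.sqrt (p n)) ^ (a / (a - 1))
      = ((n : ℝ) ^ (-(1 : ℝ) / P) * (p n : ℝ)) ^ q := by
    rw [haa, Real.rpow_mul hX0, hbase]
  have hs_le : (n : ℝ) ^ (-(1 : ℝ) / P) * (p n : ℝ) ≤ (n : ℝ) ^ (-(1 : ℝ) / P) * L :=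
    mul_le_mul_of_nonneg_left hpleL hrp0.le
  have h2nd : ((n : ℝ) ^ (-(1 : ℝ) / P) * (p n : ℝ)) ^ q
      ≤ ((n : ℝ) ^ (-(1 : ℝ) / P) * L) ^ q :=
    Real.rpow_le_rpow (by positivity) hs_le hq0.le
  have h1st : (n : ℝ) ^ (-(1 : ℝ) / P) * L ≤ ((n : ℝ) ^ (-(1 : ℝ) / P) * L) ^ q := by
    nth_rewrite 1 [← Real.rpow_one ((n : ℝ) ^ (-(1 : ℝ) / P) * L)]
    exact Real.rpow_le_rpow_of_exponent_ge htpos ht1 hq1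
  rw [hsq]
  linarith
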